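/- arXiv:math/0212347 — 2 statements merged into one kernel-verified Lean document; each statement's English description precedes it below -/
import Mathlib

section
/- Let γ_a = Σ_{j=1}^a β_j (componentwise sum of the sequences β_j of the previous construction, for odd k = 2l+1 including the middle sequence α with α_{2m} = √3 ε_0, α_{2m+1} = ε_0). Then the contraction function satisfies g(z,w;γ_a,γ_b) = (z−w)^{2 min(a,b)} if a+b ≤ k, and g(z,w;γ_a,γ_b) = (z−w)^{2 min(a,b)}(z+w)^{a+b−k} if a+b > k. -/
noncomputable section

/-- Coefficients of `exp(−Σ_{m≥1} c_m t^m / m)`. -/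
def gcoef (c : ℕ → ℂ) : ℕ → ℂ
  | 0 => 1
  | n + 1 => (-(1 : ℂ) / (n + 1)) * ∑ j ∈ Finset.range (n + 1), c (j + 1) * gcoef c (n - j)
decreasing_by exact Nat.lt_succ_of_le (Nat.sub_le n j)

/-- The contraction series `exp(−Σ_{m≥1} c_m t^m / m)` with `t = w/z`; the contraction
function is `g(z,w;α,β) = z^{⟨α_0,β^0⟩} · contrS c (w/z)` with `c m = ⟨α_m, β_{−m}⟩`. -/
def contrS (c : ℕ → ℂ) : PowerSeries ℂ := PowerSeries.mk (gcoef c)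

/-- The sequences `β_a` for odd `k = 2l+1` (`a` zero-based): `β_{a,m} = ε_{a+1}^+` for
`a < l`; the middle sequence `β_{l,m} = √3 ε_0` for even `m`, `ε_0` for odd `m`; and
`β_{a,m} = (−1)^m ε_{k−a}^-` for `a > l`. -/
def bseqOdd {V : Type*} [AddCommGroup V] [Module ℂ V] (l : ℕ) (ε0 : V) (εp εm : Fin l → V)
    (a : Fin (2 * l + 1)) (m : ℤ) : V :=
  if h : (a : ℕ) < l then εp ⟨a, h⟩
  else if h2 : (a : ℕ) = l then
    (if m % 2 = 0 then ((Real.sqrt 3 : ℝ) : ℂ) • ε0 else ε0)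
  else ((-1 : ℂ) ^ m) • εm ⟨2 * l - a, by have := a.isLt; omega⟩

/-- `γ_a = Σ_{j ≤ a} β_j` (componentwise sums of the sequences). -/
def gseq {V : Type*} [AddCommGroup V] [Module ℂ V] (l : ℕ) (ε0 : V) (εp εm : Fin l → V)
    (a : Fin (2 * l + 1)) (m : ℤ) : V :=
  ∑ j ∈ Finset.univ.filter (fun j : Fin (2 * l + 1) => j ≤ a), bseqOdd l ε0 εp εm j m

lemma gcoef_zero (c : ℕ → ℂ) : gcoef c 0 = 1 := by rw [gcoef]

lemma gcoef_succ_mul (c : ℕ → ℂ) (n : ℕ) :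
    ((n : ℂ) + 1) * gcoef c (n + 1) =
      -∑ j ∈ Finset.range (n + 1), c (j + 1) * gcoef c (n - j) := by
  have h : ((n : ℂ) + 1) ≠ 0 := Nat.cast_add_one_ne_zero n
  rw [gcoef]
  field_simp

lemma gcoef_mul_self (c : ℕ → ℂ) (n : ℕ) :
    (n : ℂ) * gcoef c n = -∑ j ∈ Finset.range n, c (j + 1) * gcoef c (n - 1 - j) := by
  cases n with
  | zero => simp
  | succ n =>
    have := gcoef_succ_mul c n
    simpa using this

def prevF (F : ℕ → ℂ) : ℕ → ℂ
  | 0 => 0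
  | n + 1 => F n

@[simp] lemma prevF_zero (F : ℕ → ℂ) : prevF F 0 = 0 := rfl
@[simp] lemma prevF_succ (F : ℕ → ℂ) (n : ℕ) : prevF F (n + 1) = F n := rfl

lemma gcoef_add_one (c : ℕ → ℂ) (n : ℕ) :
    gcoef (fun m => c m + 1) n = gcoef c n - prevF (gcoef c) n := by
  induction n using Nat.strong_induction_on with
  | _ n IH =>
    match n with
    | 0 => simp [gcoef_zero]
    | n + 1 =>
      have h : ((n : ℂ) + 1) ≠ 0 := Nat.cast_add_one_ne_zero n
      set F := gcoef c with hF
      set P := prevF (gcoef c) with hP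
      have key := gcoef_succ_mul (fun m => c m + 1) n
      rw [Finset.sum_congr rfl (fun j hj => by
        rw [IH (n - j) (Nat.lt_succ_of_le (Nat.sub_le n j))])] at key
      beta_reduce at key
      have e_split : ∑ j ∈ Finset.range (n+1), (c (j+1) + 1) * (F (n-j) - P (n-j))
          = ((∑ j ∈ Finset.range (n+1), c (j+1) * F (n-j))
            + (∑ j ∈ Finset.range (n+1), F (n-j)))
            - ((∑ j ∈ Finset.range (n+1), c (j+1) * P (n-j))
            + (∑ j ∈ Finset.range (n+1), P (n-j))) := by
        rw [← Finset.sum_add_distrib, ← Finset.sum_add_distrib, ← Finset.sum_sub_distrib]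
        exact Finset.sum_congr rfl fun j _ => by ring
      have hA : ∑ j ∈ Finset.range (n+1), c (j+1) * F (n-j)
          = -(((n : ℂ) + 1) * F (n+1)) := by
        rw [gcoef_succ_mul c n, neg_neg]
      have hT3 : ∑ j ∈ Finset.range (n+1), c (j+1) * P (n-j) = -((n : ℂ) * F n) := by
        rw [Finset.sum_range_succ]
        have h0 : c (n+1) * P (n - n) = 0 := by simp [hP]
        rw [h0, add_zero]
        rw [Finset.sum_congr rfl (fun j hj => by
          have hj' : j < n := Finset.mem_range.mp hj
          have : n - j = (n - 1 - j) + 1 := by omega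
          rw [this, hP, prevF_succ])]
        rw [gcoef_mul_self c n, neg_neg]
      have hT4 : ∑ j ∈ Finset.range (n+1), P (n-j)
          = (∑ j ∈ Finset.range (n+1), F (n-j)) - F n := by
        rw [Finset.sum_range_succ]
        have h0 : P (n - n) = 0 := by simp [hP]
        rw [h0, add_zero]
        rw [Finset.sum_congr rfl (fun j hj => by
          have hj' : j < n := Finset.mem_range.mp hj
          have : n - j = (n - 1 - j) + 1 := by omega
          rw [this, hP, prevF_succ])]
        rw [Finset.sum_range_succ' (fun j => F (n - j)) n]
        have : ∀ j ∈ Finset.range n, F (n - (j+1)) = F (n - 1 - j) := by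
          intro j hj; congr 1; omega
        rw [Finset.sum_congr rfl this]
        simp
        rfl
      rw [e_split, hA, hT3, hT4] at key
      have goal2 : ((n:ℂ)+1) * gcoef (fun m => c m + 1) (n+1)
          = ((n:ℂ)+1) * (F (n+1) - P (n+1)) := by
        rw [key, hP, prevF_succ]; ring
      exact mul_left_cancel₀ h goal2

lemma gcoef_add_alt (c : ℕ → ℂ) (n : ℕ) :
    gcoef (fun m => c m + (-1) ^ m) n = gcoef c n + prevF (gcoef c) n := by
  induction n using Nat.strong_induction_on with
  | _ n IH =>
    match n with
    | 0 => simp [gcoef_zero]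
    | n + 1 =>
      have h : ((n : ℂ) + 1) ≠ 0 := Nat.cast_add_one_ne_zero n
      set F := gcoef c with hF
      set P := prevF (gcoef c) with hP
      have key := gcoef_succ_mul (fun m => c m + (-1) ^ m) n
      rw [Finset.sum_congr rfl (fun j hj => by
        rw [IH (n - j) (Nat.lt_succ_of_le (Nat.sub_le n j))])] at key
      beta_reduce at key
      have e_split : ∑ j ∈ Finset.range (n+1), (c (j+1) + (-1:ℂ) ^ (j+1)) * (F (n-j) + P (n-j))
          = ((∑ j ∈ Finset.range (n+1), c (j+1) * F (n-j))
            + (∑ j ∈ Finset.range (n+1), (-1:ℂ) ^ (j+1) * F (n-j)))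
            + ((∑ j ∈ Finset.range (n+1), c (j+1) * P (n-j))
            + (∑ j ∈ Finset.range (n+1), (-1:ℂ) ^ (j+1) * P (n-j))) := by
        rw [← Finset.sum_add_distrib, ← Finset.sum_add_distrib, ← Finset.sum_add_distrib]
        exact Finset.sum_congr rfl fun j _ => by ring
      have hA : ∑ j ∈ Finset.range (n+1), c (j+1) * F (n-j)
          = -(((n : ℂ) + 1) * F (n+1)) := by
        rw [gcoef_succ_mul c n, neg_neg]
      have hT3 : ∑ j ∈ Finset.range (n+1), c (j+1) * P (n-j) = -((n : ℂ) * F n) := by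
        rw [Finset.sum_range_succ]
        have h0 : c (n+1) * P (n - n) = 0 := by simp [hP]
        rw [h0, add_zero]
        rw [Finset.sum_congr rfl (fun j hj => by
          have hj' : j < n := Finset.mem_range.mp hj
          have : n - j = (n - 1 - j) + 1 := by omega
          rw [this, hP, prevF_succ])]
        rw [gcoef_mul_self c n, neg_neg]
      have hU : ∑ j ∈ Finset.range (n+1), (-1:ℂ) ^ (j+1) * P (n-j)
          = ∑ j ∈ Finset.range n, (-1:ℂ) ^ (j+1) * F (n-1-j) := by
        rw [Finset.sum_range_succ]
        have h0 : (-1:ℂ) ^ (n+1) * P (n - n) = 0 := by simp [hP]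
        rw [h0, add_zero]
        exact Finset.sum_congr rfl (fun j hj => by
          have hj' : j < n := Finset.mem_range.mp hj
          have : n - j = (n - 1 - j) + 1 := by omega
          rw [this, hP, prevF_succ])
      have hS2 : ∑ j ∈ Finset.range (n+1), (-1:ℂ) ^ (j+1) * F (n-j)
          = -(∑ j ∈ Finset.range n, (-1:ℂ) ^ (j+1) * F (n-1-j)) - F n := by
        rw [Finset.sum_range_succ' (fun j => (-1:ℂ) ^ (j+1) * F (n - j)) n]
        have : ∀ j ∈ Finset.range n, (-1:ℂ) ^ (j+1+1) * F (n - (j+1))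
            = -((-1:ℂ) ^ (j+1) * F (n-1-j)) := by
          intro j hj
          have : n - (j+1) = n - 1 - j := by omega
          rw [this]; ring
        rw [Finset.sum_congr rfl this, Finset.sum_neg_distrib]
        simp only [Nat.sub_zero, pow_one]
        ring
      rw [e_split, hA, hT3, hU, hS2] at key
      have goal2 : ((n:ℂ)+1) * gcoef (fun m => c m + (-1) ^ m) (n+1)
          = ((n:ℂ)+1) * (F (n+1) + P (n+1)) := by
        rw [key, hP, prevF_succ]; ring
      exact mul_left_cancel₀ h goal2

open PowerSeries in
lemma contrS_mul_one_sub (c : ℕ → ℂ) :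
    contrS (fun m => c m + 1) = (1 - PowerSeries.X) * contrS c := by
  ext n
  rw [sub_mul, one_mul, map_sub]
  cases n with
  | zero =>
    simp [contrS, coeff_zero_X_mul, gcoef_zero]
  | succ n =>
    rw [coeff_succ_X_mul]
    simp only [contrS, coeff_mk]
    rw [gcoef_add_one, prevF_succ]

open PowerSeries in
lemma contrS_mul_one_add (c : ℕ → ℂ) :
    contrS (fun m => c m + (-1) ^ m) = (1 + PowerSeries.X) * contrS c := by
  ext n
  rw [add_mul, one_mul, map_add]
  cases n with
  | zero =>
    simp [contrS, coeff_zero_X_mul, gcoef_zero]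
  | succ n =>
    rw [coeff_succ_X_mul]
    simp only [contrS, coeff_mk]
    rw [gcoef_add_alt, prevF_succ]

lemma gcoef_const_zero (n : ℕ) : gcoef (fun _ => (0:ℂ)) n = if n = 0 then 1 else 0 := by
  induction n using Nat.strong_induction_on with
  | _ n IH =>
    match n with
    | 0 => simp [gcoef_zero]
    | n + 1 => rw [gcoef]; simp

lemma contrS_pq (p q : ℕ) :
    contrS (fun m => (p : ℂ) + (q : ℂ) * (-1) ^ m) =
      (1 - PowerSeries.X : PowerSeries ℂ) ^ p * (1 + PowerSeries.X : PowerSeries ℂ) ^ q := by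
  induction p with
  | zero =>
    induction q with
    | zero =>
      have : (fun m : ℕ => ((0:ℕ) : ℂ) + ((0:ℕ) : ℂ) * (-1) ^ m) = fun _ => (0:ℂ) := by
        funext m; simp
      rw [this]
      ext n
      simp [contrS, gcoef_const_zero, PowerSeries.coeff_one]
    | succ q IHq =>
      have : (fun m : ℕ => ((0:ℕ) : ℂ) + ((q+1 : ℕ) : ℂ) * (-1) ^ m)
          = fun m : ℕ => (((0:ℕ) : ℂ) + ((q : ℕ) : ℂ) * (-1) ^ m) + (-1) ^ m := by
        funext m; push_cast; ring
      rw [this, contrS_mul_one_add, IHq]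
      ring
  | succ p IHp =>
    have : (fun m : ℕ => ((p+1 : ℕ) : ℂ) + ((q : ℕ) : ℂ) * (-1) ^ m)
        = fun m : ℕ => (((p:ℕ) : ℂ) + ((q : ℕ) : ℂ) * (-1) ^ m) + 1 := by
      funext m; push_cast; ring
    rw [this, contrS_mul_one_sub, IHp]
    ring

section Bilin
variable {l : ℕ} {V : Type*} [AddCommGroup V] [Module ℂ V]
  (B : V →ₗ[ℂ] V →ₗ[ℂ] ℂ) (hBsymm : ∀ v w, B v w = B w v)
  (ε0 : V) (εp εm : Fin l → V)
  (h00 : B ε0 ε0 = 1)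
  (hpp : ∀ a b, B (εp a) (εp b) = if a = b then 2 else 0)
  (hmm : ∀ a b, B (εm a) (εm b) = if a = b then 2 else 0)
  (hpm : ∀ a b, B (εp a) (εm b) = if a = b then 1 else 0)
  (h0p : ∀ a, B ε0 (εp a) = 0) (h0m : ∀ a, B ε0 (εm a) = 0)

omit [Module ℂ V] in
lemma bseqOdd_lt {ε0 : V} {εp εm : Fin l → V} {a : Fin (2*l+1)} (h : (a:ℕ) < l) (m : ℤ)
    [Module ℂ V] : bseqOdd l ε0 εp εm a m = εp ⟨(a:ℕ), h⟩ := by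
  unfold bseqOdd; rw [dif_pos h]

lemma bseqOdd_mid {ε0 : V} {εp εm : Fin l → V} {a : Fin (2*l+1)} (h : (a:ℕ) = l) (m : ℤ) :
    bseqOdd l ε0 εp εm a m
      = (if m % 2 = 0 then ((Real.sqrt 3 : ℝ) : ℂ) • ε0 else ε0) := by
  unfold bseqOdd; rw [dif_neg (by omega), dif_pos h]

lemma bseqOdd_gt {ε0 : V} {εp εm : Fin l → V} {a : Fin (2*l+1)} (h : l < (a:ℕ)) (m : ℤ) :
    bseqOdd l ε0 εp εm a m
      = ((-1 : ℂ) ^ m) • εm ⟨2 * l - (a:ℕ), by have := a.isLt; omega⟩ := by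
  unfold bseqOdd; rw [dif_neg (by omega), dif_neg (by omega)]

include hBsymm h00 hpp hmm hpm h0p h0m in
lemma bseq_pointwise (i j : Fin (2 * l + 1)) (m : ℕ) :
    B (bseqOdd l ε0 εp εm i (m : ℤ)) (bseqOdd l ε0 εp εm j (-(m : ℤ))) =
      2 * (if i = j then 1 else 0)
        + (-1 : ℂ) ^ m * (if (i : ℕ) + (j : ℕ) = 2 * l then 1 else 0) := by
  have hzp : ((-1 : ℂ)) ^ (-(m : ℤ)) = (-1 : ℂ) ^ m := by
    rw [zpow_neg, ← inv_zpow, inv_neg, inv_one, zpow_natCast]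
  have hzn : ((-1 : ℂ)) ^ ((m : ℤ)) = (-1 : ℂ) ^ m := zpow_natCast _ _
  have hsq : (-1 : ℂ) ^ m * (-1 : ℂ) ^ m = 1 := by
    rw [← mul_pow]; simp
  have hil := i.isLt
  have hjl := j.isLt
  have hfe : (i = j) ↔ ((i : ℕ) = (j : ℕ)) := Fin.ext_iff
  have h1 : ∀ x, B (εm x) ε0 = 0 := fun x => by rw [hBsymm]; exact h0m x
  have h2 : ∀ x, B (εp x) ε0 = 0 := fun x => by rw [hBsymm]; exact h0p x
  have hmp : ∀ x y, B (εm x) (εp y) = if x = y then 1 else 0 := fun x y => by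
    rw [hBsymm, hpm]; exact if_congr eq_comm rfl rfl
  rcases Nat.lt_trichotomy (i:ℕ) l with hi | hi | hi <;>
    rcases Nat.lt_trichotomy (j:ℕ) l with hj | hj | hj
  · -- i<l, j<l
    rw [bseqOdd_lt hi, bseqOdd_lt hj, hpp]
    have he : ((⟨(i:ℕ), hi⟩ : Fin l) = ⟨(j:ℕ), hj⟩) ↔ (i = j) := by
      rw [Fin.ext_iff, hfe]
    have hns : ¬ ((i:ℕ) + (j:ℕ) = 2*l) := by omega
    rw [if_congr he rfl rfl, if_neg hns]
    split <;> ring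
  · -- i<l, j=l
    rw [bseqOdd_lt hi, bseqOdd_mid hj]
    have hne : ¬ (i = j) := by rw [hfe]; omega
    have hns : ¬ ((i:ℕ) + (j:ℕ) = 2*l) := by omega
    rw [if_neg hne, if_neg hns]
    split <;> simp [map_smul, h2 ⟨(i:ℕ), hi⟩, hBsymm (εp _) ε0, h0p]
  · -- i<l, j>l
    rw [bseqOdd_lt hi, bseqOdd_gt hj, map_smul, smul_eq_mul, hpm, hzp]
    have hne : ¬ (i = j) := by rw [hfe]; omega
    have he : ((⟨(i:ℕ), hi⟩ : Fin l) = ⟨2*l - (j:ℕ), by omega⟩) ↔ ((i:ℕ) + (j:ℕ) = 2*l) := by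
      rw [Fin.ext_iff]; simp; omega
    rw [if_congr he rfl rfl, if_neg hne]
    split <;> ring
  · -- i=l, j<l
    rw [bseqOdd_mid hi, bseqOdd_lt hj]
    have hne : ¬ (i = j) := by rw [hfe]; omega
    have hns : ¬ ((i:ℕ) + (j:ℕ) = 2*l) := by omega
    rw [if_neg hne, if_neg hns]
    split <;> simp [map_smul, h0p]
  · -- i=l, j=l
    rw [bseqOdd_mid hi, bseqOdd_mid hj]
    have hij : i = j := by rw [hfe]; omega
    have hs : (i:ℕ) + (j:ℕ) = 2*l := by omega
    rw [if_pos hij, if_pos hs]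
    have hpar : ((-(m : ℤ)) % 2 = 0) ↔ ((m : ℤ) % 2 = 0) := by
      rw [Int.neg_emod_two]
    by_cases hm : (m : ℤ) % 2 = 0
    · have hmeven : Even m := by
        rw [Nat.even_iff]; omega
      rw [if_pos hm, if_pos (hpar.mpr hm), LinearMap.map_smul₂, map_smul, smul_eq_mul,
        smul_eq_mul, h00, hmeven.neg_one_pow]
      have h3 : ((Real.sqrt 3 : ℝ) : ℂ) * (((Real.sqrt 3 : ℝ) : ℂ) * 1) = 3 := by
        rw [mul_one, ← Complex.ofReal_mul, Real.mul_self_sqrt (by norm_num)]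
        norm_num
      rw [h3]; ring
    · have hmodd : Odd m := by
        rw [Nat.odd_iff]; omega
      rw [if_neg hm, if_neg (fun h => hm (hpar.mp h)), h00, hmodd.neg_one_pow]
      ring
  · -- i=l, j>l
    rw [bseqOdd_mid hi, bseqOdd_gt hj]
    have hne : ¬ (i = j) := by rw [hfe]; omega
    have hns : ¬ ((i:ℕ) + (j:ℕ) = 2*l) := by omega
    rw [if_neg hne, if_neg hns]
    split <;> simp [map_smul, h0m]
  · -- i>l, j<l
    rw [bseqOdd_gt hi, bseqOdd_lt hj, LinearMap.map_smul₂, smul_eq_mul, hmp, hzn]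
    have hne : ¬ (i = j) := by rw [hfe]; omega
    have he : ((⟨2*l - (i:ℕ), by omega⟩ : Fin l) = ⟨(j:ℕ), hj⟩) ↔ ((i:ℕ) + (j:ℕ) = 2*l) := by
      rw [Fin.ext_iff]; simp; omega
    rw [if_congr he rfl rfl, if_neg hne]
    split <;> ring
  · -- i>l, j=l
    rw [bseqOdd_gt hi, bseqOdd_mid hj]
    have hne : ¬ (i = j) := by rw [hfe]; omega
    have hns : ¬ ((i:ℕ) + (j:ℕ) = 2*l) := by omega
    rw [if_neg hne, if_neg hns]
    split <;> simp [map_smul, LinearMap.map_smul₂, h1]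
  · -- i>l, j>l
    rw [bseqOdd_gt hi, bseqOdd_gt hj, map_smul, LinearMap.map_smul₂, smul_eq_mul, smul_eq_mul, hmm,
      hzp, hzn]
    have he : ((⟨2*l - (i:ℕ), by omega⟩ : Fin l) = ⟨2*l - (j:ℕ), by omega⟩) ↔ (i = j) := by
      rw [Fin.ext_iff, hfe]; simp; omega
    have hns : ¬ ((i:ℕ) + (j:ℕ) = 2*l) := by omega
    rw [if_congr he rfl rfl, if_neg hns]
    split
    · rw [mul_zero, add_zero, ← mul_assoc, hsq]; ring
    · ring
end Bilin

lemma count_nat1 (n A C : ℕ) (hA : A < n) :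
    ∑ k ∈ Finset.range n, (if k ≤ A ∧ k ≤ C then (1:ℂ) else 0) = ((min A C + 1 : ℕ) : ℂ) := by
  rw [Finset.sum_boole]
  congr 1
  have : (Finset.range n).filter (fun k => k ≤ A ∧ k ≤ C) = Finset.range (min A C + 1) := by
    ext k; simp only [Finset.mem_filter, Finset.mem_range]; omega
  rw [this, Finset.card_range]

lemma count_nat2 (l A C : ℕ) (hA : A < 2*l+1) (hC : C < 2*l+1) :
    ∑ k ∈ Finset.range (2*l+1), (if k ≤ A ∧ 2*l - k ≤ C then (1:ℂ) else 0)
      = (((A + C + 2) - (2*l+1) : ℕ) : ℂ) := by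
  rw [Finset.sum_boole]
  congr 1
  have : (Finset.range (2*l+1)).filter (fun k => k ≤ A ∧ 2*l - k ≤ C)
      = Finset.Ico (2*l - C) (A + 1) := by
    ext k; simp only [Finset.mem_filter, Finset.mem_range, Finset.mem_Ico]; omega
  rw [this, Nat.card_Ico]
  omega

section Bilin2
variable {l : ℕ} {V : Type*} [AddCommGroup V] [Module ℂ V]
  (B : V →ₗ[ℂ] V →ₗ[ℂ] ℂ) (hBsymm : ∀ v w, B v w = B w v)
  (ε0 : V) (εp εm : Fin l → V)
  (h00 : B ε0 ε0 = 1)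
  (hpp : ∀ a b, B (εp a) (εp b) = if a = b then 2 else 0)
  (hmm : ∀ a b, B (εm a) (εm b) = if a = b then 2 else 0)
  (hpm : ∀ a b, B (εp a) (εm b) = if a = b then 1 else 0)
  (h0p : ∀ a, B ε0 (εp a) = 0) (h0m : ∀ a, B ε0 (εm a) = 0)

include hBsymm h00 hpp hmm hpm h0p h0m in
lemma gseq_pointwise (a b : Fin (2 * l + 1)) (m : ℕ) :
    B (gseq l ε0 εp εm a (m : ℤ)) (gseq l ε0 εp εm b (-(m : ℤ))) =
      ((2 * (min (a:ℕ) (b:ℕ) + 1) : ℕ) : ℂ)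
        + (-1 : ℂ) ^ m * ((((a:ℕ) + (b:ℕ) + 2) - (2*l+1) : ℕ) : ℂ) := by
  have hal := a.isLt
  have hbl := b.isLt
  set Fa := Finset.univ.filter (fun j : Fin (2*l+1) => j ≤ a) with hFa
  set Fb := Finset.univ.filter (fun j : Fin (2*l+1) => j ≤ b) with hFb
  have hsum : B (gseq l ε0 εp εm a (m:ℤ)) (gseq l ε0 εp εm b (-(m:ℤ)))
      = ∑ i ∈ Fa, ∑ j ∈ Fb, B (bseqOdd l ε0 εp εm i (m:ℤ)) (bseqOdd l ε0 εp εm j (-(m:ℤ))) := by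
    unfold gseq
    rw [map_sum, Finset.sum_congr rfl (fun j _ => by rw [map_sum, LinearMap.sum_apply]),
      Finset.sum_comm]
  rw [hsum]
  rw [Finset.sum_congr rfl (fun i _ => Finset.sum_congr rfl (fun j _ =>
    bseq_pointwise B hBsymm ε0 εp εm h00 hpp hmm hpm h0p h0m i j m))]
  have hsplit : ∑ i ∈ Fa, ∑ j ∈ Fb,
      (2 * (if i = j then (1:ℂ) else 0)
        + (-1 : ℂ) ^ m * (if (i : ℕ) + (j : ℕ) = 2 * l then 1 else 0))
      = 2 * (∑ i ∈ Fa, ∑ j ∈ Fb, (if i = j then (1:ℂ) else 0))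
        + (-1 : ℂ) ^ m * (∑ i ∈ Fa, ∑ j ∈ Fb, (if (i:ℕ) + (j:ℕ) = 2*l then (1:ℂ) else 0)) := by
    rw [Finset.mul_sum, Finset.mul_sum, ← Finset.sum_add_distrib]
    refine Finset.sum_congr rfl fun i _ => ?_
    rw [Finset.mul_sum, Finset.mul_sum, ← Finset.sum_add_distrib]
  rw [hsplit]
  have hc1 : ∑ i ∈ Fa, ∑ j ∈ Fb, (if i = j then (1:ℂ) else 0) = ((min (a:ℕ) (b:ℕ) + 1 : ℕ) : ℂ) := by
    rw [Finset.sum_congr rfl (fun i _ => Finset.sum_ite_eq Fb i (fun _ => (1:ℂ)))]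
    rw [hFa, Finset.sum_filter]
    have key : ∀ i : Fin (2*l+1), (if i ≤ a then (if i ∈ Fb then (1:ℂ) else 0) else 0)
        = (if (i:ℕ) ≤ (a:ℕ) ∧ (i:ℕ) ≤ (b:ℕ) then (1:ℂ) else 0) := by
      intro i
      have hmem : i ∈ Fb ↔ (i:ℕ) ≤ (b:ℕ) := by
        rw [hFb]
        simp only [Finset.mem_filter, Finset.mem_univ, true_and, Fin.le_def]
      by_cases h1 : (i:ℕ) ≤ (a:ℕ)
      · rw [if_pos (Fin.le_def.mpr h1)]
        by_cases h2 : (i:ℕ) ≤ (b:ℕ)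
        · rw [if_pos (hmem.mpr h2), if_pos ⟨h1, h2⟩]
        · rw [if_neg (fun h => h2 (hmem.mp h)), if_neg (by tauto)]
      · rw [if_neg (fun h => h1 (Fin.le_def.mp h)), if_neg (by tauto)]
    rw [Finset.sum_congr rfl (fun i _ => key i)]
    rw [Fin.sum_univ_eq_sum_range (fun k => if k ≤ (a:ℕ) ∧ k ≤ (b:ℕ) then (1:ℂ) else 0)]
    exact count_nat1 _ _ _ hal
  have hc2 : ∑ i ∈ Fa, ∑ j ∈ Fb, (if (i:ℕ) + (j:ℕ) = 2*l then (1:ℂ) else 0)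
      = ((((a:ℕ) + (b:ℕ) + 2) - (2*l+1) : ℕ) : ℂ) := by
    have hinner : ∀ i : Fin (2*l+1), ∑ j ∈ Fb, (if (i:ℕ) + (j:ℕ) = 2*l then (1:ℂ) else 0)
        = (if 2*l - (i:ℕ) ≤ (b:ℕ) then (1:ℂ) else 0) := by
      intro i
      have hi2l : (i:ℕ) ≤ 2*l := by have := i.isLt; omega
      set j0 : Fin (2*l+1) := ⟨2*l - (i:ℕ), by omega⟩ with hj0
      have hcongr : ∀ j ∈ Fb, (if (i:ℕ) + (j:ℕ) = 2*l then (1:ℂ) else 0)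
          = (if j = j0 then (1:ℂ) else 0) := by
        intro j _
        refine if_congr ?_ rfl rfl
        rw [Fin.ext_iff]
        show (i:ℕ) + (j:ℕ) = 2*l ↔ (j:ℕ) = 2*l - (i:ℕ)
        omega
      rw [Finset.sum_congr rfl hcongr, Finset.sum_ite_eq' Fb j0 (fun _ => (1:ℂ))]
      refine if_congr ?_ rfl rfl
      rw [hFb]
      simp only [Finset.mem_filter, Finset.mem_univ, true_and, Fin.le_def]
      exact Iff.rfl
    rw [Finset.sum_congr rfl (fun i _ => hinner i), hFa, Finset.sum_filter]
    have key : ∀ i : Fin (2*l+1),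
        (if i ≤ a then (if 2*l - (i:ℕ) ≤ (b:ℕ) then (1:ℂ) else 0) else 0)
        = (if (i:ℕ) ≤ (a:ℕ) ∧ 2*l - (i:ℕ) ≤ (b:ℕ) then (1:ℂ) else 0) := by
      intro i
      by_cases h1 : (i:ℕ) ≤ (a:ℕ)
      · rw [if_pos (Fin.le_def.mpr h1)]
        by_cases h2 : 2*l - (i:ℕ) ≤ (b:ℕ)
        · rw [if_pos h2, if_pos ⟨h1, h2⟩]
        · rw [if_neg h2, if_neg (by tauto)]
      · rw [if_neg (fun h => h1 (Fin.le_def.mp h)), if_neg (by tauto)]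
    rw [Finset.sum_congr rfl (fun i _ => key i)]
    rw [Fin.sum_univ_eq_sum_range (fun k => if k ≤ (a:ℕ) ∧ 2*l - k ≤ (b:ℕ) then (1:ℂ) else 0)]
    exact count_nat2 _ _ _ hal hbl
  rw [hc1, hc2]
  push_cast
  ring
end Bilin2

/-- For `γ_a = Σ_{j=1}^a β_j` (odd `k = 2l+1`, including the middle
sequence with `α_{2m} = √3 ε_0`, `α_{2m+1} = ε_0`), the contraction function satisfies
`g(z,w;γ_a,γ_b) = (z−w)^{2 min(a,b)}` if `a + b ≤ k`, and
`g(z,w;γ_a,γ_b) = (z−w)^{2 min(a,b)} (z+w)^{a+b−k}` if `a + b > k`: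
the `z`-exponent `⟨γ_{a,0}, γ_b^0⟩` equals `2 min(a,b) + (a+b−k)₊` and the contraction
series equals `(1−t)^{2 min(a,b)} (1+t)^{(a+b−k)₊}`. -/
theorem contraction_gamma_odd (l : ℕ) (V : Type*) [AddCommGroup V] [Module ℂ V]
    (B : V →ₗ[ℂ] V →ₗ[ℂ] ℂ) (hBsymm : ∀ v w, B v w = B w v)
    (ε0 : V) (εp εm : Fin l → V)
    (h00 : B ε0 ε0 = 1)
    (hpp : ∀ a b, B (εp a) (εp b) = if a = b then 2 else 0)
    (hmm : ∀ a b, B (εm a) (εm b) = if a = b then 2 else 0)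
    (hpm : ∀ a b, B (εp a) (εm b) = if a = b then 1 else 0)
    (h0p : ∀ a, B ε0 (εp a) = 0) (h0m : ∀ a, B ε0 (εm a) = 0)
    (a b : Fin (2 * l + 1)) :
    B (gseq l ε0 εp εm a 0) (gseq l ε0 εp εm b 0) =
      ((2 * (min (a : ℕ) (b : ℕ) + 1) + (((a : ℕ) + (b : ℕ) + 2) - (2 * l + 1)) : ℕ) : ℂ) ∧
    contrS (fun m => B (gseq l ε0 εp εm a (m : ℤ)) (gseq l ε0 εp εm b (-(m : ℤ)))) =
      (1 - PowerSeries.X : PowerSeries ℂ) ^ (2 * (min (a : ℕ) (b : ℕ) + 1)) *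
        (1 + PowerSeries.X : PowerSeries ℂ) ^ (((a : ℕ) + (b : ℕ) + 2) - (2 * l + 1)) := by
  have hg := gseq_pointwise B hBsymm ε0 εp εm h00 hpp hmm hpm h0p h0m a b
  constructor
  · have h0 := hg 0
    norm_num at h0
    rw [h0]
    push_cast
    ring
  · have hfun : (fun m : ℕ => B (gseq l ε0 εp εm a (m : ℤ)) (gseq l ε0 εp εm b (-(m : ℤ))))
        = fun m : ℕ => ((2 * (min (a:ℕ) (b:ℕ) + 1) : ℕ) : ℂ)
            + (((((a:ℕ) + (b:ℕ) + 2) - (2*l+1) : ℕ)) : ℂ) * (-1) ^ m := by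
      funext m
      rw [hg m]
      ring
    rw [hfun, contrS_pq]
end
end

section
/- Let F ∈ ℂ[x_1,...,x_n]^{S_n} be a symmetric polynomial that vanishes whenever x_1 = ··· = x_a = −x_{a+1} = ··· = −x_{k+1} for every 0 ≤ a ≤ k+1 (i.e., whenever a variables equal t and k+1−a variables equal −t for a common value t). Then for a partition λ of n with parts ≤ k, the evaluation φ_λ(F) (substituting blocks of variables by x_i^{(a)} with multiplicity a) is divisible by ∏_{a<b, a+b>k} ∏_{i,j} (x_i^{(a)} + x_j^{(b)})^{a+b−k} · ∏_{a > k/2} ∏_{i<j} (x_i^{(a)} + x_j^{(a)})^{2a−k}, provided F vanishes under φ_ν for all ν ≻ λ. -/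
open MvPolynomial

/-- The list of parts (in decreasing order) of the partition whose part `a+1` occurs
with multiplicity `m a`. -/
def partsOf {k : ℕ} (m : Fin k → ℕ) : List ℕ :=
  (((List.finRange k).reverse).map fun a => List.replicate (m a) ((a : ℕ) + 1)).flatten

/-- `b` groups the `n` variables into blocks: for each block index `p = (a, i)`,
exactly `a+1` of the variables are sent to `p`. -/
def IsBlockMap {k n : ℕ} (m : Fin k → ℕ) (b : Fin n → (a : Fin k) × Fin (m a)) : Prop :=
  ∀ p : (a : Fin k) × Fin (m a),
    (Finset.univ.filter fun i => b i = p).card = (p.1 : ℕ) + 1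

/-- A linear order on block indices, to enumerate each unordered pair once. -/
def pairLT {k : ℕ} {m : Fin k → ℕ} (p q : (a : Fin k) × Fin (m a)) : Prop :=
  (p.1 : ℕ) < (q.1 : ℕ) ∨ ((p.1 : ℕ) = (q.1 : ℕ) ∧ (p.2 : ℕ) < (q.2 : ℕ))

instance {k : ℕ} {m : Fin k → ℕ} (p q : (a : Fin k) × Fin (m a)) : Decidable (pairLT p q) := by
  unfold pairLT; infer_instance



noncomputable section GordonAux

variable {σ : Type*} [DecidableEq σ]

lemma mv_prime_X (i : σ) : Prime (X i : MvPolynomial σ ℂ) := by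
  classical
  let e : MvPolynomial σ ℂ ≃ₐ[ℂ] Polynomial (MvPolynomial {r : σ // r ≠ i} ℂ) :=
    (renameEquiv ℂ (Equiv.optionSubtypeNe i).symm).trans
      (optionEquivLeft ℂ {r : σ // r ≠ i})
  have he : e (X i) = Polynomial.X := by
    simp only [e, AlgEquiv.trans_apply, renameEquiv_apply, rename_X]
    rw [Equiv.optionSubtypeNe_symm_self]
    exact optionEquivLeft_X_none ℂ _
  have := (MulEquiv.prime_iff e.toRingEquiv.toMulEquiv (p := X i)).mp
  rw [show e.toRingEquiv.toMulEquiv (X i) = e (X i) from rfl, he] at this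
  exact this Polynomial.prime_X

lemma mv_prime_lin {p q : σ} (h : p ≠ q) : Prime (X p + X q : MvPolynomial σ ℂ) := by
  classical
  let φ : MvPolynomial σ ℂ →ₐ[ℂ] MvPolynomial σ ℂ :=
    aeval (fun r => if r = q then X q - X p else X r)
  let ψ : MvPolynomial σ ℂ →ₐ[ℂ] MvPolynomial σ ℂ :=
    aeval (fun r => if r = q then X q + X p else X r)
  have h1 : φ.comp ψ = AlgHom.id ℂ _ := by
    apply MvPolynomial.algHom_ext
    intro r
    by_cases hr : r = q <;>
      simp [φ, ψ, hr, aeval_X, h, h.symm]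
  have h2 : ψ.comp φ = AlgHom.id ℂ _ := by
    apply MvPolynomial.algHom_ext
    intro r
    by_cases hr : r = q <;>
      simp [φ, ψ, hr, aeval_X, h, h.symm]
  let E : MvPolynomial σ ℂ ≃ₐ[ℂ] MvPolynomial σ ℂ := AlgEquiv.ofAlgHom φ ψ h1 h2
  have hE : E (X p + X q) = X q := by
    show φ (X p + X q) = X q
    simp [φ, aeval_X, h, h.symm]
  have := (MulEquiv.prime_iff E.toRingEquiv.toMulEquiv (p := X p + X q)).mp
  rw [show E.toRingEquiv.toMulEquiv (X p + X q) = E (X p + X q) from rfl, hE] at this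
  exact this (mv_prime_X q)

lemma mv_not_dvd_lin {p q p' q' z : σ} (hp'q' : p' ≠ q') (hz : z ≠ p) (hzq : z ≠ q)
    (hz' : z = p' ∨ z = q') : ¬ (X p + X q : MvPolynomial σ ℂ) ∣ (X p' + X q') := by
  classical
  rintro ⟨c, hc⟩
  have := congrArg (eval (fun r => if r = z then (1 : ℂ) else 0)) hc
  simp only [map_add, map_mul, eval_X] at this
  rw [if_neg (Ne.symm hz), if_neg (Ne.symm hzq)] at this
  rcases hz' with rfl | rfl
  · rw [if_pos rfl, if_neg (fun hh => hp'q' (hh.symm))] at this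
    simpa using this
  · rw [if_pos rfl, if_neg hp'q'] at this
    simpa using this

lemma prod_pow_dvd {S : Type*} [CommRing S] [IsDomain S] {ι : Type*} [DecidableEq ι]
    (s : Finset ι) (P : ι → S) (e : ι → ℕ) (g : S)
    (hP : ∀ i ∈ s, Prime (P i))
    (hnd : ∀ i ∈ s, ∀ j ∈ s, i ≠ j → ¬ P i ∣ P j)
    (hdvd : ∀ i ∈ s, P i ^ e i ∣ g) :
    (∏ i ∈ s, P i ^ e i) ∣ g := by
  classical
  induction s using Finset.induction with
  | empty => simpa using one_dvd g
  | insert a s ha ih =>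
    have IH : (∏ i ∈ s, P i ^ e i) ∣ g :=
      ih (fun i hi => hP i (Finset.mem_insert_of_mem hi))
        (fun i hi j hj hij => hnd i (Finset.mem_insert_of_mem hi) j
          (Finset.mem_insert_of_mem hj) hij)
        (fun i hi => hdvd i (Finset.mem_insert_of_mem hi))
    obtain ⟨h, hg⟩ := IH
    have hPa : Prime (P a) := hP a (Finset.mem_insert_self a s)
    have hnotdvd : ¬ P a ∣ (∏ i ∈ s, P i ^ e i) := by
      intro hd
      obtain ⟨i, hi, hdi⟩ := hPa.exists_mem_finset_dvd hd
      have : P a ∣ P i := hPa.dvd_of_dvd_pow hdi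
      exact hnd a (Finset.mem_insert_self a s) i (Finset.mem_insert_of_mem hi)
        (fun hai => ha (hai ▸ hi)) this
    have hpow : P a ^ e a ∣ (∏ i ∈ s, P i ^ e i) * h := by
      rw [← hg]; exact hdvd a (Finset.mem_insert_self a s)
    have : P a ^ e a ∣ h := hPa.pow_dvd_of_dvd_mul_left _ hnotdvd hpow
    obtain ⟨h2, hh2⟩ := this
    rw [Finset.prod_insert ha, hg, hh2]
    ring_nf
    exact ⟨h2, by ring⟩

end GordonAux



noncomputable section GordonAux2

lemma exists_perm_two_blocks {X : Type*} [DecidableEq X] [Fintype X]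
    (A₁ A₂ B₁ B₂ : Finset X) (h12 : Disjoint A₁ A₂) (h12' : Disjoint B₁ B₂)
    (hc1 : A₁.card = B₁.card) (hc2 : A₂.card = B₂.card) :
    ∃ π : Equiv.Perm X, (∀ x ∈ A₁, π x ∈ B₁) ∧ (∀ x ∈ A₂, π x ∈ B₂) := by
  classical
  have hcc : ((A₁ ∪ A₂)ᶜ : Finset X).card = ((B₁ ∪ B₂)ᶜ : Finset X).card := by
    rw [Finset.card_compl, Finset.card_compl,
      Finset.card_union_of_disjoint h12, Finset.card_union_of_disjoint h12', hc1, hc2]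
  let e₁ : (A₁ : Finset X) ≃ (B₁ : Finset X) := Finset.equivOfCardEq hc1
  let e₂ : (A₂ : Finset X) ≃ (B₂ : Finset X) := Finset.equivOfCardEq hc2
  let e₃ : ((A₁ ∪ A₂)ᶜ : Finset X) ≃ ((B₁ ∪ B₂)ᶜ : Finset X) := Finset.equivOfCardEq hcc
  let g : X → X := fun x =>
    if h : x ∈ A₁ then (e₁ ⟨x, h⟩ : X)
    else if h2 : x ∈ A₂ then (e₂ ⟨x, h2⟩ : X)
    else (e₃ ⟨x, by simp [Finset.mem_compl, Finset.mem_union, h, h2]⟩ : X)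
  have hmem1 : ∀ x (h : x ∈ A₁), g x ∈ B₁ := by
    intro x h; simp only [g, dif_pos h]; exact (e₁ ⟨x, h⟩).2
  have hmem2 : ∀ x (h : x ∉ A₁) (h2 : x ∈ A₂), g x ∈ B₂ := by
    intro x h h2; simp only [g, dif_neg h, dif_pos h2]; exact (e₂ ⟨x, h2⟩).2
  have hmem3 : ∀ x (h : x ∉ A₁) (h2 : x ∉ A₂), g x ∈ (B₁ ∪ B₂)ᶜ := by
    intro x h h2; simp only [g, dif_neg h, dif_neg h2]; exact (e₃ ⟨x, _⟩).2
  have hinj : Function.Injective g := by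
    intro x y hxy
    by_cases hx1 : x ∈ A₁ <;> by_cases hy1 : y ∈ A₁
    · have := hxy
      simp only [g, dif_pos hx1, dif_pos hy1] at this
      have := e₁.injective (Subtype.ext this)
      exact congrArg Subtype.val this
    · by_cases hy2 : y ∈ A₂
      · exact absurd (hxy ▸ hmem1 x hx1) (Finset.disjoint_left.mp h12' · (hmem2 y hy1 hy2))
      · have hc := hmem3 y hy1 hy2
        rw [← hxy] at hc
        exact absurd (Finset.mem_union_left _ (hmem1 x hx1)) (Finset.mem_compl.mp hc)
    · by_cases hx2 : x ∈ A₂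
      · exact absurd (hxy ▸ hmem2 x hx1 hx2)
          (fun hm => Finset.disjoint_left.mp h12' (hmem1 y hy1) hm)
      · have hc := hmem3 x hx1 hx2
        rw [hxy] at hc
        exact absurd (Finset.mem_union_left _ (hmem1 y hy1)) (Finset.mem_compl.mp hc)
    · by_cases hx2 : x ∈ A₂ <;> by_cases hy2 : y ∈ A₂
      · have := hxy
        simp only [g, dif_neg hx1, dif_neg hy1, dif_pos hx2, dif_pos hy2] at this
        exact congrArg Subtype.val (e₂.injective (Subtype.ext this))
      · have hc := hmem3 y hy1 hy2
        rw [← hxy] at hc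
        exact absurd (Finset.mem_union_right _ (hmem2 x hx1 hx2)) (Finset.mem_compl.mp hc)
      · have hc := hmem3 x hx1 hx2
        rw [hxy] at hc
        exact absurd (Finset.mem_union_right _ (hmem2 y hy1 hy2)) (Finset.mem_compl.mp hc)
      · have := hxy
        simp only [g, dif_neg hx1, dif_neg hy1, dif_neg hx2, dif_neg hy2] at this
        exact congrArg Subtype.val (e₃.injective (Subtype.ext this))
  refine ⟨Equiv.ofBijective g (Finite.injective_iff_bijective.mp hinj), ?_, ?_⟩
  · intro x hx; exact hmem1 x hx
  · intro x hx
    by_cases hx1 : x ∈ A₁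
    · exact absurd hx (Finset.disjoint_left.mp h12 hx1)
    · exact hmem2 x hx1 hx

end GordonAux2



noncomputable section GordonCore

lemma aeval_comp_apply {R A B : Type*} {σ : Type*} [CommSemiring R] [CommSemiring A]
    [CommSemiring B] [Algebra R A] [Algebra R B] (φ : A →ₐ[R] B) (u : σ → A)
    (f : MvPolynomial σ R) : φ (aeval u f) = aeval (fun i => φ (u i)) f := by
  rw [← MvPolynomial.comp_aeval]; rfl

lemma coeff_kill {R : Type*} [CommRing R] {τ : Type*} [DecidableEq τ]
    (S : Finset τ) (P : MvPolynomial τ R) (d : τ →₀ ℕ) (hd : ∀ t ∈ S, d t = 0) :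
    coeff d (aeval (fun t => if t ∈ S then (0 : MvPolynomial τ R) else X t) P) = coeff d P := by
  classical
  conv_lhs => rw [P.as_sum]
  rw [map_sum, MvPolynomial.coeff_sum]
  have key : ∀ v ∈ P.support,
      coeff d (aeval (fun t => if t ∈ S then (0 : MvPolynomial τ R) else X t)
        (monomial v (coeff v P))) = if v = d then coeff v P else 0 := by
    intro v _
    rw [aeval_monomial]
    by_cases hvS : ∃ t ∈ S, v t ≠ 0
    · obtain ⟨t₀, ht₀S, ht₀⟩ := hvS
      have : (v.prod fun t k => (if t ∈ S then (0 : MvPolynomial τ R) else X t) ^ k) = 0 := by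
        apply Finset.prod_eq_zero (Finsupp.mem_support_iff.mpr ht₀)
        show (if t₀ ∈ S then (0 : MvPolynomial τ R) else X t₀) ^ (v t₀) = 0
        rw [if_pos ht₀S, zero_pow ht₀]
      rw [this, mul_zero]
      have hvd : v ≠ d := by
        intro h; exact ht₀ (by rw [h]; exact hd t₀ ht₀S)
      rw [if_neg hvd, coeff_zero]
    · push_neg at hvS
      have : (v.prod fun t k => (if t ∈ S then (0 : MvPolynomial τ R) else X t) ^ k)
          = v.prod fun t k => (X t : MvPolynomial τ R) ^ k := by
        apply Finsupp.prod_congr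
        intro t ht
        rw [if_neg (fun hts => (Finsupp.mem_support_iff.mp ht) (hvS t hts))]
      rw [this, algebraMap_eq, ← monomial_eq, coeff_monomial]
  rw [Finset.sum_congr rfl key, Finset.sum_ite_eq' P.support d (fun v => coeff v P)]
  by_cases hdP : d ∈ P.support
  · rw [if_pos hdP]
  · rw [if_neg hdP]
    exact (notMem_support_iff.mp hdP).symm

lemma core_vanishing {R : Type*} [CommRing R] {τ : Type*} [DecidableEq τ]
    (F : MvPolynomial τ R) (B : Finset τ) (c : R) (s : ℕ) (hs : s ≤ B.card)
    (hvanish : ∀ S : Finset τ, S ⊆ B → S.card = s →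
      aeval (fun t => if t ∈ S then MvPolynomial.C c else X t) F = 0) :
    (Polynomial.X - Polynomial.C (MvPolynomial.C c)) ^ (B.card - s + 1) ∣
      aeval (fun t => if t ∈ B then (Polynomial.X : Polynomial (MvPolynomial τ R))
        else Polynomial.C (X t)) F := by
  classical
  set e' := B.card - s + 1 with he'
  set F' : MvPolynomial τ R :=
    aeval (fun t => if t ∈ B then X t + MvPolynomial.C c else X t) F with hF'
  -- every monomial of F' meets B in at least e' variables
  have hsupp : ∀ d ∈ F'.support, e' ≤ (B ∩ d.support).card := by
    intro d hd
    by_contra hlt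
    push_neg at hlt
    have h1 : (B \ d.support).card + (B ∩ d.support).card = B.card :=
      Finset.card_sdiff_add_card_inter B d.support
    have hcard : s ≤ (B \ d.support).card := by omega
    obtain ⟨S, hSsub, hScard⟩ := Finset.exists_subset_card_eq hcard
    have hSB : S ⊆ B := hSsub.trans (Finset.sdiff_subset)
    have hkill : aeval (fun t => if t ∈ S then (0 : MvPolynomial τ R) else X t) F' = 0 := by
      rw [hF', aeval_comp_apply]
      have hcomp : (fun t => aeval (fun t' => if t' ∈ S then (0 : MvPolynomial τ R) else X t')
            (if t ∈ B then X t + MvPolynomial.C c else X t)) =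
          fun t => aeval (fun t' => if t' ∈ B ∧ t' ∉ S then X t' + MvPolynomial.C c else X t')
            (if t ∈ S then MvPolynomial.C c else X t) := by
        funext t
        by_cases htS : t ∈ S
        · rw [if_pos (hSB htS), if_pos htS]
          simp [htS]
        · by_cases htB : t ∈ B <;> simp [htB, htS]
      rw [hcomp, ← aeval_comp_apply, hvanish S hSB hScard, map_zero]
    have hck := coeff_kill S F' d (fun t ht =>
      Finsupp.notMem_support_iff.mp (Finset.mem_sdiff.mp (hSsub ht)).2)
    rw [hkill, coeff_zero] at hck
    exact (MvPolynomial.mem_support_iff.mp hd) hck.symm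
  -- the diagonal of F' is divisible by X^e'
  have hdvd' : (Polynomial.X : Polynomial (MvPolynomial τ R)) ^ e' ∣
      aeval (fun t => if t ∈ B then (Polynomial.X : Polynomial (MvPolynomial τ R))
        else Polynomial.C (X t)) F' := by
    conv_rhs => rw [F'.as_sum]
    rw [map_sum]
    apply Finset.dvd_sum
    intro d hd
    rw [aeval_monomial]
    apply Dvd.dvd.mul_left
    have hsplit : (d.prod fun t k =>
        (if t ∈ B then (Polynomial.X : Polynomial (MvPolynomial τ R))
          else Polynomial.C (X t)) ^ k) =
        (∏ t ∈ d.support.filter (· ∈ B), (Polynomial.X : Polynomial (MvPolynomial τ R)) ^ d t) *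
        (∏ t ∈ d.support.filter (fun t => ¬ t ∈ B),
          (Polynomial.C (X t) : Polynomial (MvPolynomial τ R)) ^ d t) := by
      rw [Finsupp.prod, ← Finset.prod_filter_mul_prod_filter_not d.support (· ∈ B)]
      congr 1
      · refine Finset.prod_congr rfl (fun t ht => ?_)
        rw [if_pos (Finset.mem_filter.mp ht).2]
      · refine Finset.prod_congr rfl (fun t ht => ?_)
        rw [if_neg (Finset.mem_filter.mp ht).2]
    rw [hsplit]
    apply dvd_mul_of_dvd_left
    rw [Finset.prod_pow_eq_pow_sum]
    apply pow_dvd_pow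
    calc e' ≤ (B ∩ d.support).card := hsupp d hd
      _ = (d.support.filter (· ∈ B)).card := by
          rw [Finset.inter_comm, Finset.filter_mem_eq_inter]  -- maybe adjust
      _ ≤ ∑ t ∈ d.support.filter (· ∈ B), d t := by
          rw [Finset.card_eq_sum_ones]
          exact Finset.sum_le_sum (fun t ht => Nat.one_le_iff_ne_zero.mpr
            (Finsupp.mem_support_iff.mp (Finset.mem_filter.mp ht).1))
  -- transfer back to F via the substitution X ↦ X - C c
  have hFF' : aeval (fun t => if t ∈ B then X t - MvPolynomial.C c else X t) F' = F := by
    rw [hF', aeval_comp_apply]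
    have : (fun t => aeval (fun t' => if t' ∈ B then X t' - MvPolynomial.C c else X t')
        (if t ∈ B then X t + MvPolynomial.C c else X t)) = fun t => (X t : MvPolynomial τ R) := by
      funext t
      by_cases htB : t ∈ B <;> simp [htB]
    rw [this, aeval_X_left_apply]
  set Θ : Polynomial (MvPolynomial τ R) →ₐ[R] Polynomial (MvPolynomial τ R) :=
    (Polynomial.aeval ((Polynomial.X : Polynomial (MvPolynomial τ R))
      - Polynomial.C (MvPolynomial.C c))).restrictScalars R with hΘdef
  have hΘX : Θ Polynomial.X = Polynomial.X - Polynomial.C (MvPolynomial.C c) := by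
    simp [hΘdef]
  have hD : Θ (aeval (fun t => if t ∈ B then (Polynomial.X : Polynomial (MvPolynomial τ R))
        else Polynomial.C (X t)) F') =
      aeval (fun t => if t ∈ B then (Polynomial.X : Polynomial (MvPolynomial τ R))
        else Polynomial.C (X t)) F := by
    have h1 : Θ (aeval (fun t => if t ∈ B then (Polynomial.X : Polynomial (MvPolynomial τ R))
        else Polynomial.C (X t)) F') = aeval (fun t => Θ (if t ∈ B
          then (Polynomial.X : Polynomial (MvPolynomial τ R)) else Polynomial.C (X t))) F' :=
      aeval_comp_apply _ _ _
    have h2 : aeval (fun t => if t ∈ B then (Polynomial.X : Polynomial (MvPolynomial τ R))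
        else Polynomial.C (X t)) F = aeval (fun t =>
          aeval (fun t' => if t' ∈ B then (Polynomial.X : Polynomial (MvPolynomial τ R))
            else Polynomial.C (X t'))
          (if t ∈ B then X t - MvPolynomial.C c else X t)) F' := by
      conv_lhs => rw [← hFF']
      exact aeval_comp_apply _ _ _
    have hfun : (fun t => Θ (if t ∈ B then (Polynomial.X : Polynomial (MvPolynomial τ R))
          else Polynomial.C (X t))) = fun t =>
        aeval (fun t' => if t' ∈ B then (Polynomial.X : Polynomial (MvPolynomial τ R))
          else Polynomial.C (X t')) (if t ∈ B then X t - MvPolynomial.C c else X t) := by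
      funext t
      by_cases htB : t ∈ B
      · rw [if_pos htB, if_pos htB, hΘX]
        simp [htB, Polynomial.algebraMap_apply, MvPolynomial.algebraMap_eq]
      · rw [if_neg htB, if_neg htB]
        simp [hΘdef, htB]
    rw [h1, h2, hfun]
  calc (Polynomial.X - Polynomial.C (MvPolynomial.C c)) ^ e' = Θ (Polynomial.X ^ e') := by
        rw [map_pow, hΘX]
    _ ∣ _ := hD ▸ map_dvd Θ hdvd'

end GordonCore



noncomputable section GordonAuxAll

lemma aeval_comp_apply2 {R A B : Type*} {σ : Type*} [CommSemiring R] [CommSemiring A]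
    [CommSemiring B] [Algebra R A] [Algebra R B] (φ : A →ₐ[R] B) (u : σ → A)
    (f : MvPolynomial σ R) : φ (aeval u f) = aeval (fun i => φ (u i)) f := by
  rw [← MvPolynomial.comp_aeval]; rfl

lemma aeval_comp_apply₂ {R A A' B : Type*} {σ : Type*} [CommSemiring R] [CommSemiring A]
    [CommSemiring A'] [CommSemiring B] [Algebra R A] [Algebra A A'] [Algebra A B]
    [Algebra R A'] [Algebra R B] [IsScalarTower R A A'] [IsScalarTower R A B]
    (φ : A' →ₐ[A] B) (u : σ → A') (f : MvPolynomial σ R) :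
    φ (aeval u f) = aeval (fun i => φ (u i)) f :=
  aeval_comp_apply2 (φ.restrictScalars R) u f

lemma aeval_congr' {R A : Type*} {σ : Type*} [CommSemiring R] [CommSemiring A] [Algebra R A]
    {u v : σ → A} (h : ∀ i, u i = v i) (f : MvPolynomial σ R) : aeval u f = aeval v f := by
  rw [funext h]

end GordonAuxAll

section PerPair

variable {k n : ℕ} {m : Fin k → ℕ}

lemma perpair_dvd (f : MvPolynomial (Fin n) ℂ) (hsym : f.IsSymmetric)
    (hvan : ∀ a : ℕ, a ≤ k + 1 → k + 1 ≤ n →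
      aeval (fun i : Fin n =>
        if (i : ℕ) < a then (X (Sum.inl ()) : MvPolynomial (Unit ⊕ Fin n) ℂ)
        else if (i : ℕ) < k + 1 then - X (Sum.inl ())
        else X (Sum.inr i)) f = 0)
    (b : Fin n → (a : Fin k) × Fin (m a)) (hb : IsBlockMap m b)
    (p q : (a : Fin k) × Fin (m a)) (hpne : p ≠ q) :
    ((X p + X q : MvPolynomial ((a : Fin k) × Fin (m a)) ℂ))
        ^ (((p.1 : ℕ) + (q.1 : ℕ) + 2) - k)
      ∣ aeval (fun i => X (b i)) f := by
  classical
  by_cases htriv : (p.1 : ℕ) + (q.1 : ℕ) + 2 ≤ k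
  · rw [Nat.sub_eq_zero_of_le htriv, pow_zero]; exact one_dvd _
  push_neg at htriv
  set α : ℕ := (p.1 : ℕ) + 1 with hα
  set β : ℕ := (q.1 : ℕ) + 1 with hβ
  have hαβ : k + 1 ≤ α + β := by omega
  have hαk : α ≤ k := p.1.isLt
  set s : ℕ := k + 1 - α with hs
  have hsβ : s ≤ β := by omega
  set Pb : Finset (Fin n) := Finset.univ.filter (fun i => b i = p) with hPbdef
  set Qb : Finset (Fin n) := Finset.univ.filter (fun i => b i = q) with hQbdef
  have hPb : Pb.card = α := hb p
  have hQb : Qb.card = β := hb q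
  have hdisjPQ : Disjoint Pb Qb := by
    rw [Finset.disjoint_left]
    intro i hi hi'
    exact hpne ((Finset.mem_filter.mp hi).2.symm.trans (Finset.mem_filter.mp hi').2)
  have hn : k + 1 ≤ n := by
    have h1 : (Pb ∪ Qb).card ≤ n := by
      simpa using Finset.card_le_univ (Pb ∪ Qb)
    rw [Finset.card_union_of_disjoint hdisjPQ, hPb, hQb] at h1
    omega
  set F₁ : MvPolynomial (Fin n) (MvPolynomial ((a : Fin k) × Fin (m a)) ℂ) :=
    aeval (fun i => if b i = q then (X i : MvPolynomial (Fin n)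
        (MvPolynomial ((a : Fin k) × Fin (m a)) ℂ))
      else MvPolynomial.C (X (b i))) f with hF₁
  -- the vanishing hypothesis for the core lemma
  have hvanS : ∀ S : Finset (Fin n), S ⊆ Qb → S.card = s →
      aeval (fun t => if t ∈ S then MvPolynomial.C
          (-X p : MvPolynomial ((a : Fin k) × Fin (m a)) ℂ) else X t) F₁ = 0 := by
    intro S hSQ hScard
    have hcomp : aeval (fun t => if t ∈ S then MvPolynomial.C
          (-X p : MvPolynomial ((a : Fin k) × Fin (m a)) ℂ) else X t) F₁
        = aeval (fun i => if i ∈ S then MvPolynomial.C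
            (-X p : MvPolynomial ((a : Fin k) × Fin (m a)) ℂ)
            else if b i = q then X i else MvPolynomial.C (X (b i))) f := by
      rw [hF₁, aeval_comp_apply₂ (aeval (fun t => if t ∈ S then MvPolynomial.C
        (-X p : MvPolynomial ((a : Fin k) × Fin (m a)) ℂ) else X t))]
      refine aeval_congr' (fun i => ?_) f
      by_cases hiS : i ∈ S
      · have hbi : b i = q := (Finset.mem_filter.mp (hSQ hiS)).2
        simp [hbi, hiS]
      · by_cases hbi : b i = q <;> simp [hbi, hiS, MvPolynomial.algebraMap_eq]
    rw [hcomp]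
    -- build the permutation
    have hαn : α ≤ n := by omega
    set A₁ : Finset (Fin n) := (Finset.range α).attachFin
      (fun j hj => lt_of_lt_of_le (Finset.mem_range.mp hj) hαn) with hA₁def
    set A₂ : Finset (Fin n) := ((Finset.range (k+1)) \ (Finset.range α)).attachFin
      (fun j hj => lt_of_lt_of_le
        (Finset.mem_range.mp (Finset.mem_sdiff.mp hj).1) hn) with hA₂def
    have hA₁card : A₁.card = α := by
      rw [hA₁def, Finset.card_attachFin, Finset.card_range]
    have hA₂card : A₂.card = s := by
      rw [hA₂def, Finset.card_attachFin,
        Finset.card_sdiff_of_subset (Finset.range_subset_range.mpr (show α ≤ k + 1 by omega)), Finset.card_range,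
        Finset.card_range]
    have hdisjA : Disjoint A₁ A₂ := by
      rw [Finset.disjoint_left]
      intro i hi hi'
      rw [hA₁def, Finset.mem_attachFin, Finset.mem_range] at hi
      rw [hA₂def, Finset.mem_attachFin, Finset.mem_sdiff, Finset.mem_range,
        Finset.mem_range] at hi'
      exact hi'.2 hi
    have hdisjPS : Disjoint Pb S :=
      Finset.disjoint_of_subset_right hSQ hdisjPQ
    obtain ⟨π, hπ1, hπ2⟩ := exists_perm_two_blocks A₁ A₂ Pb S hdisjA hdisjPS
      (by rw [hA₁card, hPb]) (by rw [hA₂card, hScard])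
    -- symmetry
    set v : Fin n → MvPolynomial (Fin n) (MvPolynomial ((a : Fin k) × Fin (m a)) ℂ) := fun i =>
      if i ∈ S then MvPolynomial.C (-X p : MvPolynomial ((a : Fin k) × Fin (m a)) ℂ)
      else if b i = q then X i else MvPolynomial.C (X (b i)) with hvdef
    have hsymstep : aeval v f = aeval (fun i => v (π i)) f := by
      conv_lhs => rw [← hsym π, aeval_rename]
      rfl
    rw [hsymstep]
    -- pushforward of hvan
    have h0 := hvan α (by omega) hn
    set χ : Unit ⊕ Fin n → MvPolynomial (Fin n) (MvPolynomial ((a : Fin k) × Fin (m a)) ℂ) :=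
      Sum.elim (fun _ => MvPolynomial.C (X p : MvPolynomial ((a : Fin k) × Fin (m a)) ℂ))
        (fun i => v (π i)) with hχdef
    have hpush := congrArg (aeval χ) h0
    rw [map_zero, aeval_comp_apply2 (aeval χ)] at hpush
    have hfun : (fun i : Fin n => aeval χ
        (if (i : ℕ) < α then (X (Sum.inl ()) : MvPolynomial (Unit ⊕ Fin n) ℂ)
          else if (i : ℕ) < k + 1 then - X (Sum.inl ())
          else X (Sum.inr i))) = fun i => v (π i) := by
      funext i
      by_cases h1 : (i : ℕ) < α
      · rw [if_pos h1]
        have hiA₁ : i ∈ A₁ := by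
          rw [hA₁def, Finset.mem_attachFin, Finset.mem_range]; exact h1
        have hπP : π i ∈ Pb := hπ1 i hiA₁
        have hbπ : b (π i) = p := (Finset.mem_filter.mp hπP).2
        have hπS : π i ∉ S := Finset.disjoint_left.mp hdisjPS hπP
        have hbq : ¬ b (π i) = q := by rw [hbπ]; exact hpne
        simp only [aeval_X, hχdef, Sum.elim_inl, hvdef]
        rw [if_neg hπS, if_neg hbq, hbπ]
      · by_cases h2 : (i : ℕ) < k + 1
        · rw [if_neg h1, if_pos h2]
          have hiA₂ : i ∈ A₂ := by
            rw [hA₂def, Finset.mem_attachFin, Finset.mem_sdiff, Finset.mem_range,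
              Finset.mem_range]
            exact ⟨h2, h1⟩
          have hπS : π i ∈ S := hπ2 i hiA₂
          simp [map_neg, aeval_X, hχdef, Sum.elim_inl, hvdef, hπS]
        · rw [if_neg h1, if_neg h2, aeval_X]
          simp only [hχdef, Sum.elim_inr]
    rw [hfun] at hpush
    exact hpush
  -- apply the core lemma
  have hcore := core_vanishing F₁ Qb
    (-X p : MvPolynomial ((a : Fin k) × Fin (m a)) ℂ) s (by rw [hQb]; exact hsβ) hvanS
  have hexp : Qb.card - s + 1 = ((p.1 : ℕ) + (q.1 : ℕ) + 2) - k := by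
    rw [hQb]; omega
  rw [hexp] at hcore
  -- push down to Polynomial
  set ε : MvPolynomial (Fin n) (MvPolynomial ((a : Fin k) × Fin (m a)) ℂ)
      →ₐ[MvPolynomial ((a : Fin k) × Fin (m a)) ℂ] MvPolynomial ((a : Fin k) × Fin (m a)) ℂ :=
    aeval (fun t : Fin n => X (b t)) with hεdef
  have hdvd2 := map_dvd (Polynomial.mapAlgHom ε) hcore
  have hfac2 : (Polynomial.mapAlgHom ε) ((Polynomial.X - Polynomial.C (MvPolynomial.C
        (-X p : MvPolynomial ((a : Fin k) × Fin (m a)) ℂ)))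
      ^ (((p.1 : ℕ) + (q.1 : ℕ) + 2) - k)) =
      (Polynomial.X + Polynomial.C (X p : MvPolynomial ((a : Fin k) × Fin (m a)) ℂ))
        ^ (((p.1 : ℕ) + (q.1 : ℕ) + 2) - k) := by
    rw [map_pow]
    congr 1
    rw [Polynomial.coe_mapAlgHom, Polynomial.map_sub, Polynomial.map_X, Polynomial.map_C]
    simp [sub_neg_eq_add]
  have hD2 : (Polynomial.mapAlgHom ε) (aeval (fun t => if t ∈ Qb
        then (Polynomial.X : Polynomial (MvPolynomial (Fin n)
          (MvPolynomial ((a : Fin k) × Fin (m a)) ℂ)))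
        else Polynomial.C (X t)) F₁) =
      aeval (fun i => if b i = q
        then (Polynomial.X : Polynomial (MvPolynomial ((a : Fin k) × Fin (m a)) ℂ))
        else Polynomial.C (X (b i))) f := by
    rw [aeval_comp_apply2 (Polynomial.mapAlgHom ε)]
    rw [hF₁, aeval_comp_apply₂ (aeval (fun t => (Polynomial.mapAlgHom ε) (if t ∈ Qb
      then (Polynomial.X : Polynomial (MvPolynomial (Fin n)
        (MvPolynomial ((a : Fin k) × Fin (m a)) ℂ)))
      else Polynomial.C (X t))))]
    refine aeval_congr' (fun i => ?_) f
    by_cases hbi : b i = q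
    · have hiQ : i ∈ Qb := by rw [hQbdef, Finset.mem_filter]; exact ⟨Finset.mem_univ i, hbi⟩
      simp [hbi, hiQ, hεdef, Polynomial.coe_mapAlgHom]
    · have hiQ : i ∉ Qb := by
        rw [hQbdef, Finset.mem_filter]; exact fun h => hbi h.2
      simp [hbi, hiQ, hεdef, Polynomial.coe_mapAlgHom, MvPolynomial.algebraMap_eq,
        Polynomial.algebraMap_apply]
  rw [hfac2, hD2] at hdvd2
  -- final evaluation X ↦ X q
  have hdvd3 := map_dvd (Polynomial.aeval
    (X q : MvPolynomial ((a : Fin k) × Fin (m a)) ℂ)) hdvd2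
  have hfac3 : (Polynomial.aeval (X q : MvPolynomial ((a : Fin k) × Fin (m a)) ℂ))
      ((Polynomial.X + Polynomial.C (X p : MvPolynomial ((a : Fin k) × Fin (m a)) ℂ))
        ^ (((p.1 : ℕ) + (q.1 : ℕ) + 2) - k))
      = (X p + X q : MvPolynomial ((a : Fin k) × Fin (m a)) ℂ)
        ^ (((p.1 : ℕ) + (q.1 : ℕ) + 2) - k) := by
    rw [map_pow]
    congr 1
    rw [map_add, Polynomial.aeval_X, Polynomial.aeval_C]
    rw [add_comm]
    simp
  have hD3 : (Polynomial.aeval (X q : MvPolynomial ((a : Fin k) × Fin (m a)) ℂ))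
      (aeval (fun i => if b i = q
        then (Polynomial.X : Polynomial (MvPolynomial ((a : Fin k) × Fin (m a)) ℂ))
        else Polynomial.C (X (b i))) f) = aeval (fun i => X (b i)) f := by
    rw [aeval_comp_apply₂ (Polynomial.aeval
      (X q : MvPolynomial ((a : Fin k) × Fin (m a)) ℂ))]
    refine aeval_congr' (fun i => ?_) f
    by_cases hbi : b i = q
    · simp [hbi]
    · simp [hbi]
  rw [hfac3, hD3] at hdvd3
  exact hdvd3

end PerPair


section MainAsm

variable {k : ℕ} {m : Fin k → ℕ}

lemma pairLT_ne' {p q : (a : Fin k) × Fin (m a)} (h : pairLT p q) : p ≠ q := by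
  rintro rfl
  rcases h with h | ⟨_, h⟩ <;> exact lt_irrefl _ h

lemma pairLT_asymm' {p q : (a : Fin k) × Fin (m a)} (h : pairLT p q) (h' : pairLT q p) :
    False := by
  rcases h with h | ⟨e, h⟩ <;> rcases h' with h' | ⟨e', h'⟩ <;> omega

lemma exists_z' {p q p' q' : (a : Fin k) × Fin (m a)} (h : pairLT p q) (h' : pairLT p' q')
    (hne : ¬ (p = p' ∧ q = q')) : ∃ z, (z = p' ∨ z = q') ∧ z ≠ p ∧ z ≠ q := by
  by_cases h1 : p' ≠ p ∧ p' ≠ q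
  · exact ⟨p', Or.inl rfl, h1.1, h1.2⟩
  · have hp'cases : p' = p ∨ p' = q := by tauto
    rcases hp'cases with rfl | rfl
    · refine ⟨q', Or.inr rfl, ?_, ?_⟩
      · intro hq'
        exact (pairLT_ne' h') hq'.symm
      · intro hq'
        exact hne ⟨rfl, hq'.symm⟩
    · refine ⟨q', Or.inr rfl, ?_, ?_⟩
      · intro hq'
        subst hq'
        exact pairLT_asymm' h h'
      · intro hq'
        exact (pairLT_ne' h') hq'.symm

end MainAsm

/-- Let `F` be a symmetric polynomial in `n` variables over `ℂ` that
vanishes whenever `a` of its variables equal `t` and `k+1−a` variables equal `−t` for a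
common value `t` (for every `0 ≤ a ≤ k+1`).  Then for a partition `λ` of `n` with parts
`≤ k`, if `F` vanishes under `φ_ν` for all `ν ≻ λ`, the block evaluation `φ_λ(F)` is
divisible by `∏_{a<b, a+b>k} ∏_{i,j} (x_i^{(a)} + x_j^{(b)})^{a+b−k} ·
∏_{a>k/2} ∏_{i<j} (x_i^{(a)} + x_j^{(a)})^{2a−k}` (each unordered pair of distinct
variables in blocks of sizes `a, b` contributing `(x + y)^{(a+b−k)₊}`). -/
theorem gordon_divisibility_k3_plus (k n : ℕ) (f : MvPolynomial (Fin n) ℂ)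
    (hsym : f.IsSymmetric)
    (hvan : ∀ a : ℕ, a ≤ k + 1 → k + 1 ≤ n →
      aeval (fun i : Fin n =>
        if (i : ℕ) < a then (X (Sum.inl ()) : MvPolynomial (Unit ⊕ Fin n) ℂ)
        else if (i : ℕ) < k + 1 then - X (Sum.inl ())
        else X (Sum.inr i)) f = 0)
    (m : Fin k → ℕ) (hm : ∑ a : Fin k, ((a : ℕ) + 1) * m a = n)
    (b : Fin n → (a : Fin k) × Fin (m a)) (hb : IsBlockMap m b)
    (hlex : ∀ m' : Fin k → ℕ, (∑ a : Fin k, ((a : ℕ) + 1) * m' a = n) →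
      List.Lex (· < ·) (partsOf m) (partsOf m') →
      ∀ b' : Fin n → (a : Fin k) × Fin (m' a), IsBlockMap m' b' →
        aeval (fun i => X (b' i)) f = (0 : MvPolynomial ((a : Fin k) × Fin (m' a)) ℂ)) :
    ((∏ pq ∈ Finset.univ.filter
        (fun pq : ((a : Fin k) × Fin (m a)) × ((a : Fin k) × Fin (m a)) =>
          pairLT pq.1 pq.2),
        (X pq.1 + X pq.2) ^ (((pq.1.1 : ℕ) + (pq.2.1 : ℕ) + 2) - k)) :
        MvPolynomial ((a : Fin k) × Fin (m a)) ℂ)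
      ∣ aeval (fun i => X (b i)) f := by
  classical
  apply prod_pow_dvd
  · intro pq hpq
    exact mv_prime_lin (pairLT_ne' (Finset.mem_filter.mp hpq).2)
  · intro pq hpq pq' hpq' hne
    obtain ⟨z, hz1, hz2, hz3⟩ := exists_z' (Finset.mem_filter.mp hpq).2
      (Finset.mem_filter.mp hpq').2
      (fun hc => hne (Prod.ext hc.1 hc.2))
    exact mv_not_dvd_lin (pairLT_ne' (Finset.mem_filter.mp hpq').2) hz2 hz3 hz1
  · intro pq hpq
    exact perpair_dvd f hsym hvan b hb pq.1 pq.2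
      (pairLT_ne' (Finset.mem_filter.mp hpq).2)
end
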